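/- Let F_q be a finite field of characteristic p with q elements, K a field extension of F_q of degree m, and l ≥ 1. Let C_1, C_2 ⊆ K^l, and suppose there exist α ∈ K^×, L ∈ GL_l(F_q), and γ ∈ Gal(K/F_p) such that C_2 = {γ-applied-coordinatewise to α·(x·L) : x ∈ C_1}. Then for every ordered F_q-basis b of K, there exists an invertible, rank-preserving, F_q-semi-linear map g : F_q^{l×m} → F_q^{l×m} with g(ε_b(C_1)) = ε_b(C_2); that is, ε_b(C_1) and ε_b(C_2) are semi-linearly matrix equivalent. -/

import Mathlib

open Matrix
open scoped MatrixGroups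

/-- Matrix expansion with respect to an ordered basis `b` of `K` over `F`. -/
noncomputable def expand {F K : Type*} [Field F] [Field K] [Algebra F K] {m l : ℕ}
    (b : Module.Basis (Fin m) F K) (x : Fin l → K) : Matrix (Fin l) (Fin m) F :=
  Matrix.of fun i j => b.repr (x i) j

section AuxLemmas

open Polynomial Submodule

variable {F K : Type*} [Field F] [Fintype F] [Field K] [Fintype K] [Algebra F K]

lemma aux_mem_range (a : K) (ha : a ^ Fintype.card F = a) :
    a ∈ Set.range (algebraMap F K) := by
  classical
  set q := Fintype.card F with hq
  have h1q : 1 < q := Fintype.one_lt_card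
  have hsub : Set.range (algebraMap F K) ⊆ {x : K | x ^ q = x} := by
    rintro _ ⟨c, rfl⟩
    simp only [Set.mem_setOf_eq, ← map_pow, hq, FiniteField.pow_card c]
  have hfin : {x : K | x ^ q = x}.Finite := Set.toFinite _
  have hne : (X ^ q - X : K[X]) ≠ 0 := FiniteField.X_pow_card_sub_X_ne_zero K h1q
  have hsub2 : {x : K | x ^ q = x} ⊆ ((X ^ q - X : K[X]).roots.toFinset : Set K) := by
    intro x hx
    simp only [Finset.coe_sort_coe, Multiset.mem_toFinset, Finset.mem_coe,
      mem_roots hne, IsRoot.def, eval_sub, eval_pow, eval_X]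
    rw [hx, sub_self]
  have hle : {x : K | x ^ q = x}.ncard ≤ q := by
    calc {x : K | x ^ q = x}.ncard ≤ ((X ^ q - X : K[X]).roots.toFinset : Set K).ncard :=
          Set.ncard_le_ncard hsub2 (Set.toFinite _)
      _ = (X ^ q - X : K[X]).roots.toFinset.card := Set.ncard_coe_finset _
      _ ≤ Multiset.card (X ^ q - X : K[X]).roots := Multiset.toFinset_card_le _
      _ ≤ (X ^ q - X : K[X]).natDegree := Polynomial.card_roots' _
      _ = q := FiniteField.X_pow_card_sub_X_natDegree_eq K h1q
  have hcard : q ≤ (Set.range (algebraMap F K)).ncard := by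
    rw [← Set.image_univ, Set.ncard_image_of_injective _ (algebraMap F K).injective,
      Set.ncard_univ, Nat.card_eq_fintype_card]
  have := Set.eq_of_subset_of_ncard_le hsub (hle.trans hcard) hfin
  rw [this]
  exact ha

lemma aux_delta (γ : K ≃+* K) :
    ∃ δ : F ≃+* F, ∀ c : F, algebraMap F K (δ c) = γ (algebraMap F K c) := by
  have hex : ∀ c : F, ∃ d : F, algebraMap F K d = γ (algebraMap F K c) := by
    intro c
    exact aux_mem_range _ (by rw [← map_pow, ← map_pow, FiniteField.pow_card])
  choose δ0 hδ0 using hex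
  have inj := (algebraMap F K).injective
  let δh : F →+* F :=
  { toFun := δ0
    map_one' := inj (by rw [hδ0]; simp)
    map_mul' := fun a c => inj (by rw [hδ0, _root_.map_mul, _root_.map_mul, _root_.map_mul, hδ0, hδ0])
    map_zero' := inj (by rw [hδ0]; simp)
    map_add' := fun a c => inj (by rw [hδ0, _root_.map_add, _root_.map_add, _root_.map_add, hδ0, hδ0]) }
  have hinj : Function.Injective δh := by
    intro a c h
    apply inj
    apply γ.injective
    rw [← hδ0, ← hδ0]
    exact congrArg (algebraMap F K) h
  exact ⟨RingEquiv.ofBijective δh (Finite.injective_iff_bijective.mp hinj), hδ0⟩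

lemma aux_finrank_card (W₁ W₂ : Submodule F K) (h : Nat.card W₁ = Nat.card W₂) :
    Module.finrank F W₁ = Module.finrank F W₂ := by
  classical
  have h1 : Fintype.card W₁ = Fintype.card W₂ := by
    rwa [Nat.card_eq_fintype_card, Nat.card_eq_fintype_card] at h
  rw [Module.card_eq_pow_finrank (K := F) (V := W₁), Module.card_eq_pow_finrank (K := F) (V := W₂)] at h1
  exact Nat.pow_right_injective Fintype.one_lt_card h1

lemma aux_rank_expand {m l : ℕ} (b : Module.Basis (Fin m) F K) (y : Fin l → K) :
    (Matrix.of fun i j => b.repr (y i) j : Matrix (Fin l) (Fin m) F).rank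
      = Module.finrank F (span F (Set.range y)) := by
  rw [Matrix.rank_eq_finrank_span_row]
  have h1 : Set.range (Matrix.of fun i j => b.repr (y i) j : Matrix (Fin l) (Fin m) F)
      = ⇑(b.equivFun) '' Set.range y := by
    rw [← Set.range_comp]
    congr 1

  rw [show (Matrix.of fun i j => b.repr (y i) j : Matrix (Fin l) (Fin m) F).row = Matrix.of fun i j => b.repr (y i) j from rfl, h1, ← LinearEquiv.coe_coe, ← Submodule.map_span]
  exact LinearEquiv.finrank_map_eq b.equivFun _



end AuxLemmas

/-- **Semi-linear rank-metric equivalence yields semi-linear matrix equivalence of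
expansions.**  If `C₂` is the image of `C₁` under `x ↦ (α • (x · L))^γ` with `α ∈ K^×`,
`L ∈ GL_l(F)` and `γ ∈ Gal(K/F_p)`, then for every ordered `F`-basis `b` of `K` there is
an invertible, rank-preserving, `F`-semi-linear map `g` on `F^{l×m}` with
`g(ε_b(C₁)) = ε_b(C₂)`. -/
theorem expanded_codes_of_semilinear_rank_metric_equivalent
    {F K : Type*} [Field F] [Fintype F] [Field K] [Fintype K] [Algebra F K]
    (p : ℕ) [Fact p.Prime] [CharP F p] {m l : ℕ}
    (hm : Module.finrank F K = m) (hl : 1 ≤ l)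
    (C₁ C₂ : Set (Fin l → K)) (α : Kˣ) (L : GL (Fin l) F) (γ : K ≃+* K)
    (hC : C₂ = (fun x => fun i =>
        γ ((α : K) • Matrix.vecMul x ((L : Matrix (Fin l) (Fin l) F).map (algebraMap F K)) i)) '' C₁)
    (b : Module.Basis (Fin m) F K) :
    ∃ g : Matrix (Fin l) (Fin m) F ≃+ Matrix (Fin l) (Fin m) F,
      (∃ δ : F ≃+* F, ∀ (c : F) (A : Matrix (Fin l) (Fin m) F), g (c • A) = δ c • g A) ∧
      (∀ A, (g A).rank = A.rank) ∧
      ⇑g '' (expand b '' C₁) = expand b '' C₂ := by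
  classical
  obtain ⟨δ, hδ⟩ := aux_delta (F := F) γ
  haveI : RingHomSurjective (δ : F →+* F) := ⟨δ.surjective⟩
  -- the coordinatewise additive equivalence on K
  let u : K ≃+ K :=
  { toFun := fun k => γ ((α : K) * k)
    invFun := fun k => (α : K)⁻¹ * γ.symm k
    left_inv := fun k => by
      simp [RingEquiv.symm_apply_apply, inv_mul_cancel_left₀ α.ne_zero]
    right_inv := fun k => by
      simp [mul_inv_cancel_left₀ α.ne_zero]
    map_add' := fun a c => by simp [mul_add, map_add] }
  have husl : ∀ (c : F) (k : K), u (c • k) = δ c • u k := by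
    intro c k
    show γ ((α : K) * c • k) = δ c • γ ((α : K) * k)
    rw [Algebra.smul_def, Algebra.smul_def, mul_left_comm, _root_.map_mul, hδ]
  -- u as a δ-semilinear map
  let usl : K →ₛₗ[(δ : F →+* F)] K :=
  { toFun := u
    map_add' := fun a c => map_add u a c
    map_smul' := husl }
  -- the matrix unit over K
  let M : (Matrix (Fin l) (Fin l) K)ˣ :=
    Units.map ((algebraMap F K).mapMatrix : Matrix (Fin l) (Fin l) F →+* Matrix (Fin l) (Fin l) K).toMonoidHom L
  have hM : (M : Matrix (Fin l) (Fin l) K) = (L : Matrix (Fin l) (Fin l) F).map (algebraMap F K) := rfl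
  have hMinv : ((M⁻¹ : _) : Matrix (Fin l) (Fin l) K)
      = ((L⁻¹ : GL (Fin l) F) : Matrix (Fin l) (Fin l) F).map (algebraMap F K) := by
    rw [← map_inv]
    rfl
  -- the additive equivalences
  let Φ₁ : (Fin l → K) ≃+ (Fin l → K) :=
  { toFun := fun x => Matrix.vecMul x (M : Matrix (Fin l) (Fin l) K)
    invFun := fun y => Matrix.vecMul y ((M⁻¹ : _) : Matrix (Fin l) (Fin l) K)
    left_inv := fun x => by dsimp only; rw [Matrix.vecMul_vecMul, Units.mul_inv, Matrix.vecMul_one]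
    right_inv := fun y => by dsimp only; rw [Matrix.vecMul_vecMul, Units.inv_mul, Matrix.vecMul_one]
    map_add' := fun a c => by rw [Matrix.add_vecMul] }
  let Φ : (Fin l → K) ≃+ (Fin l → K) := Φ₁.trans (AddEquiv.piCongrRight fun _ => u)
  have hΦ : ∀ x i, Φ x i = u (Matrix.vecMul x (M : Matrix (Fin l) (Fin l) K) i) := fun x i => rfl
  let E : (Fin l → K) ≃+ Matrix (Fin l) (Fin m) F :=
    AddEquiv.piCongrRight fun _ : Fin l => b.equivFun.toAddEquiv
  have hE : ∀ x, E x = expand b x := by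
    intro x
    funext i j
    show b.equivFun (x i) j = b.repr (x i) j
    rw [Module.Basis.equivFun_apply]
  have hEsmul : ∀ (c : F) (x : Fin l → K), E (c • x) = c • E x := by
    intro c x
    funext i j
    show b.equivFun ((c • x) i) j = (c • E x) i j
    rw [Pi.smul_apply, _root_.map_smul]
    rfl
  have hvsmul : ∀ (c : F) (z : Fin l → K),
      Matrix.vecMul (c • z) (M : Matrix (Fin l) (Fin l) K)
        = c • Matrix.vecMul z (M : Matrix (Fin l) (Fin l) K) := by
    intro c z
    funext i
    simp [Matrix.vecMul, dotProduct, Finset.smul_sum, smul_mul_assoc]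
  have hΦsmul : ∀ (c : F) (x : Fin l → K), Φ (c • x) = δ c • Φ x := by
    intro c x
    funext i
    rw [hΦ, hvsmul, Pi.smul_apply, husl, Pi.smul_apply, hΦ]
  refine ⟨(E.symm.trans Φ).trans E, ⟨δ, ?_⟩, ?_, ?_⟩
  · intro c A
    have h1 : E.symm (c • A) = c • E.symm A := by
      apply E.injective
      rw [hEsmul, E.apply_symm_apply, E.apply_symm_apply]
    show E (Φ (E.symm (c • A))) = δ c • E (Φ (E.symm A))
    rw [h1, hΦsmul, hEsmul]
  · intro A
    set x := E.symm A with hx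
    have hA : A = expand b x := by rw [← hE, E.apply_symm_apply]
    have hg : ((E.symm.trans Φ).trans E) A = expand b (Φ x) := by
      show E (Φ (E.symm A)) = _
      rw [hE]
    rw [hg, hA,
      show (expand b (Φ x)) = (Matrix.of fun i j => b.repr (Φ x i) j : Matrix (Fin l) (Fin m) F)
        from rfl, aux_rank_expand,
      show (expand b x) = (Matrix.of fun i j => b.repr (x i) j : Matrix (Fin l) (Fin m) F)
        from rfl, aux_rank_expand]
    set y := Matrix.vecMul x (M : Matrix (Fin l) (Fin l) K) with hy
    have hr : Set.range (Φ x) = u '' Set.range y := by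
      rw [← Set.range_comp]
      congr 1
    have hspan : Submodule.span F (Set.range (Φ x))
        = Submodule.map usl (Submodule.span F (Set.range y)) := by
      rw [Submodule.map_span, hr]
      rfl
    have hcards : Nat.card (Submodule.span F (Set.range (Φ x)) : Set K)
        = Nat.card (Submodule.span F (Set.range y) : Set K) := by
      rw [hspan, Submodule.map_coe]
      exact Nat.card_image_of_injective u.injective _
    have h1 : Module.finrank F (Submodule.span F (Set.range (Φ x)))
        = Module.finrank F (Submodule.span F (Set.range y)) :=
      aux_finrank_card _ _ hcards
    rw [h1]
    have hle : ∀ (z : Fin l → K) (P : Matrix (Fin l) (Fin l) F),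
        Submodule.span F (Set.range (Matrix.vecMul z (P.map (algebraMap F K))))
          ≤ Submodule.span F (Set.range z) := by
      intro z P
      rw [Submodule.span_le]
      rintro _ ⟨i, rfl⟩
      have hvi : Matrix.vecMul z (P.map (algebraMap F K)) i = ∑ j, P j i • z j := by
        simp [Matrix.vecMul, dotProduct, Algebra.smul_def, mul_comm]
      rw [hvi]
      exact Submodule.sum_mem _ fun j _ =>
        Submodule.smul_mem _ _ (Submodule.subset_span ⟨j, rfl⟩)
    have hyx : Submodule.span F (Set.range y) = Submodule.span F (Set.range x) := by
      refine le_antisymm ?_ ?_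
      · rw [hy, hM]
        exact hle x _
      · have hxy : x = Matrix.vecMul y ((M⁻¹ : _) : Matrix (Fin l) (Fin l) K) := by
          rw [hy, Matrix.vecMul_vecMul, Units.mul_inv, Matrix.vecMul_one]
        conv_lhs => rw [hxy, hMinv]
        exact hle y _
    rw [hyx]
  · rw [hC, Set.image_image, Set.image_image]
    apply Set.image_congr
    intro x _
    show E (Φ (E.symm (expand b x))) = _
    rw [← hE x, E.symm_apply_apply, hE]
    congr 1
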